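/- For every finite coloring of an infinite abelian group G and every natural number n, there exists a monochromatic symmetric subset A ⊆ G with |A| ≥ n. -/

import Mathlib

/-- Assemble a monochromatic symmetric set from a finset `T` such that both `T`
and its reflection about `x` have color `c`. -/
lemma assemble {G : Type} [AddCommGroup G] {r : ℕ} (χ : G → Fin r) (n : ℕ)
    (c : Fin r) (x : G) (T : Finset G) (hT : n ≤ T.card)
    (h : ∀ a ∈ T, χ a = c ∧ χ (2 • x - a) = c) :
    ∃ A : Set G, (∃ c, ∀ a ∈ A, χ a = c) ∧
      (∃ x : G, A = (fun a => 2 • x - a) '' A) ∧ (n : Cardinal) ≤ Cardinal.mk A := by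
  refine ⟨(↑T : Set G) ∪ (fun a => 2 • x - a) '' ↑T, ⟨c, ?_⟩, ⟨x, ?_⟩, ?_⟩
  · rintro a (ha | ⟨b, hb, rfl⟩)
    · exact (h a ha).1
    · exact (h b hb).2
  · rw [Set.image_union, Set.image_image]
    have himg : (fun a => 2 • x - (2 • x - a)) '' (↑T : Set G) = ↑T := by
      have hid : (fun a : G => 2 • x - (2 • x - a)) = id := by
        funext a; simp
      rw [hid, Set.image_id]
    rw [himg, Set.union_comm]
  · calc (n : Cardinal) ≤ (T.card : Cardinal) := by exact_mod_cast hT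
      _ = Cardinal.mk (↑T : Set G) := Cardinal.mk_coe_finset.symm
      _ ≤ _ := Cardinal.mk_le_mk_of_subset Set.subset_union_left

/-- The key counting lemma: in a finite set `F` with small sumset `S`, all of whose
pairwise sums are divisible by 2, one finds a color `c`, a center, and `n` points of
color `c` whose reflections also have color `c`. -/
lemma key {G : Type} [AddCommGroup G] {r : ℕ} (χ : G → Fin r) (hr : 0 < r) (n : ℕ)
    (hn : 0 < n) (F S : Finset G)
    (hadd : ∀ a ∈ F, ∀ b ∈ F, a + b ∈ S)
    (hdiv : ∀ a ∈ F, ∀ b ∈ F, ∃ x : G, a + b = x + x)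
    (hcard : 2 * r * r * n ≤ F.card)
    (hS : S.card ≤ 2 * F.card) :
    ∃ (c : Fin r) (x : G) (T : Finset G),
      n ≤ T.card ∧ ∀ a ∈ T, χ a = c ∧ χ (x + x - a) = c := by
  classical
  have hM : 0 < F.card := lt_of_lt_of_le (by positivity) hcard
  set M := F.card with hMdef
  -- First pigeonhole: a popular color class `C` inside `F`.
  obtain ⟨c, -, hc⟩ := Finset.exists_lt_card_fiber_of_mul_lt_card_of_maps_to
    (f := χ) (t := (Finset.univ : Finset (Fin r))) (s := F)
    (fun a _ => Finset.mem_univ _)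
    (by
      rw [Finset.card_univ, Fintype.card_fin]
      calc r * ((M - 1) / r) ≤ M - 1 := by
            rw [mul_comm]; exact Nat.div_mul_le_self _ _
        _ < M := by omega)
  set C := F.filter (fun a => χ a = c) with hCdef
  set q := (M - 1) / r + 1 with hqdef
  have hCq : q ≤ C.card := hc
  have hMq : M ≤ r * q := by
    have h3 : M - 1 < r * ((M - 1) / r + 1) := Nat.lt_mul_div_succ _ hr
    rw [← hqdef] at h3
    omega
  have hq2 : 2 * r * n ≤ q := by
    have h1 : r * (2 * r * n) ≤ r * q := by
      calc r * (2 * r * n) = 2 * r * r * n := by ring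
        _ ≤ M := hcard
        _ ≤ r * q := hMq
    exact Nat.le_of_mul_le_mul_left h1 hr
  have hq0 : 0 < q := by rw [hqdef]; exact Nat.succ_pos _
  -- Second pigeonhole: a popular sum among pairs from `C`.
  obtain ⟨s₀, hs₀S, hP⟩ := Finset.exists_lt_card_fiber_of_mul_lt_card_of_maps_to
    (f := fun p : G × G => p.1 + p.2) (s := C ×ˢ C) (t := S)
    (fun p hp => by
      rw [Finset.mem_product] at hp
      exact hadd _ (Finset.mem_of_mem_filter _ hp.1) _ (Finset.mem_of_mem_filter _ hp.2))
    (by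
      have e1 : (C ×ˢ C).card = C.card * C.card := Finset.card_product C C
      have hS2 : S.card ≤ 2 * (r * q) := by
        calc S.card ≤ 2 * F.card := hS
          _ = 2 * M := rfl
          _ ≤ 2 * (r * q) := Nat.mul_le_mul_left 2 hMq
      have h1 : S.card * (n - 1) ≤ 2 * (r * q) * (n - 1) :=
        Nat.mul_le_mul_right (n - 1) hS2
      have h2 : 2 * (r * q) * (n - 1) < q * q := by
        have h3 : 2 * r * (n - 1) < q := by
          have hlt : 2 * r * (n - 1) < 2 * r * n := by
            have h4 : n - 1 < n := by omega
            exact mul_lt_mul_of_pos_left h4 (by positivity)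
          exact lt_of_lt_of_le hlt hq2
        calc 2 * (r * q) * (n - 1) = q * (2 * r * (n - 1)) := by ring
          _ < q * q := by exact mul_lt_mul_of_pos_left h3 hq0
      calc S.card * (n - 1) ≤ 2 * (r * q) * (n - 1) := h1
        _ < q * q := h2
        _ ≤ C.card * C.card := Nat.mul_le_mul hCq hCq
        _ = (C ×ˢ C).card := e1.symm)
  set P := (C ×ˢ C).filter (fun p => p.1 + p.2 = s₀) with hPdef
  have hPn : n ≤ P.card := by
    have : n - 1 < P.card := hP
    omega
  -- Facts about members of `P`.
  have hPfact : ∀ p ∈ P, p.1 ∈ C ∧ p.2 ∈ C ∧ p.1 + p.2 = s₀ := by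
    intro p hp
    rw [hPdef, Finset.mem_filter, Finset.mem_product] at hp
    exact ⟨hp.1.1, hp.1.2, hp.2⟩
  -- The first coordinates of `P` form the desired set `T`.
  have hinj : Set.InjOn Prod.fst (↑P : Set (G × G)) := by
    intro p hp p' hp' h
    obtain ⟨-, -, h2⟩ := hPfact p (by exact_mod_cast hp)
    obtain ⟨-, -, h2'⟩ := hPfact p' (by exact_mod_cast hp')
    have hs : p.1 + p.2 = p.1 + p'.2 := by rw [h2, h, h2']
    exact Prod.ext h (add_left_cancel hs)
  set T := P.image Prod.fst with hTdef
  have hTcard : n ≤ T.card := by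
    rw [hTdef, Finset.card_image_of_injOn hinj]
    exact hPn
  -- A center `x` with `x + x = s₀`.
  obtain ⟨p₀, hp₀⟩ := Finset.card_pos.mp (lt_of_lt_of_le hn hPn)
  obtain ⟨h1, h2, h3⟩ := hPfact p₀ hp₀
  obtain ⟨x, hx⟩ := hdiv p₀.1 (Finset.mem_of_mem_filter _ h1)
    p₀.2 (Finset.mem_of_mem_filter _ h2)
  have hxs : s₀ = x + x := by rw [← h3, hx]
  refine ⟨c, x, T, hTcard, ?_⟩
  intro a ha
  obtain ⟨p, hpP, rfl⟩ := Finset.mem_image.mp ha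
  obtain ⟨hc1, hc2, hsum⟩ := hPfact p hpP
  have hrefl : x + x - p.1 = p.2 := by
    rw [← hxs, ← hsum]; abel
  constructor
  · exact (Finset.mem_filter.mp hc1).2
  · rw [hrefl]
    exact (Finset.mem_filter.mp hc2).2

/-- Every finite coloring of an infinite abelian group has monochromatic
symmetric subsets of arbitrarily large finite size. -/
theorem stmt_2 (G : Type) [AddCommGroup G] [Infinite G] (r : ℕ) (χ : G → Fin r) (n : ℕ) :
    ∃ A : Set G, (∃ c, ∀ a ∈ A, χ a = c) ∧
      (∃ x : G, A = (fun a => 2 • x - a) '' A) ∧ (n : Cardinal) ≤ Cardinal.mk A := by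
  classical
  rcases Nat.eq_zero_or_pos r with hr | hr
  · subst hr; exact (χ (Classical.arbitrary G)).elim0
  rcases Nat.eq_zero_or_pos n with hn | hn
  · subst hn
    exact assemble χ 0 ⟨0, hr⟩ 0 ∅ (le_refl 0) (by simp)
  -- The 2-torsion subset.
  set B : Set G := {g | g + g = 0} with hBdef
  by_cases hB : B.Infinite
  · -- Easy case: infinitely many involutions; any monochromatic subset works.
    have hcol : ∃ c, {g | g ∈ B ∧ χ g = c}.Infinite := by
      by_contra h
      push_neg at h
      try simp only [Set.not_infinite] at h
      have hsub : B ⊆ ⋃ c : Fin r, {g | g ∈ B ∧ χ g = c} :=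
        fun g hg => Set.mem_iUnion.2 ⟨χ g, hg, rfl⟩
      exact hB ((Set.finite_iUnion h).subset hsub)
    obtain ⟨c, hc⟩ := hcol
    obtain ⟨T, hTsub, hTcard⟩ := hc.exists_subset_card_eq n
    refine assemble χ n c 0 T (le_of_eq hTcard.symm) ?_
    intro a ha
    obtain ⟨haB, hac⟩ := hTsub ha
    have hneg : -a = a := neg_eq_of_add_eq_zero_right haB
    constructor
    · exact hac
    · have : (2 : ℕ) • (0 : G) - a = a := by
        rw [smul_zero, zero_sub, hneg]
      rw [this]; exact hac
  · -- Hard case: `B` finite, so the set of "doubles" is infinite.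
    rw [Set.not_infinite] at hB
    set H : Set G := {g | ∃ y : G, y + y = g} with hHdef
    have hH : H.Infinite := by
      by_contra hfin
      rw [Set.not_infinite] at hfin
      have huniv : (Set.univ : Set G).Finite := by
        have hsub : (Set.univ : Set G) ⊆ ⋃ h ∈ H, {g | g + g = h} := by
          intro g _
          exact Set.mem_biUnion ⟨g, rfl⟩ rfl
        refine (Set.Finite.biUnion hfin fun h _ => ?_).subset hsub
        rcases Set.eq_empty_or_nonempty {g | g + g = h} with he | ⟨g₀, hg₀⟩
        · rw [he]; exact Set.finite_empty
        · refine Set.Finite.subset (hB.image (fun b => g₀ + b)) ?_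
          intro g hg
          refine ⟨g - g₀, ?_, by simp⟩
          have hgg : g + g = h := hg
          have hg₀g : g₀ + g₀ = h := hg₀
          show (g - g₀) + (g - g₀) = 0
          have : (g - g₀) + (g - g₀) = (g + g) - (g₀ + g₀) := by abel
          rw [this, hgg, hg₀g, sub_self]
      exact Set.infinite_univ huniv
    -- `H` is closed under addition (it is the image of doubling).
    by_cases hd : ∃ d ∈ H, ∀ m : ℕ, 0 < m → m • d ≠ 0
    · -- An element of infinite order: use an arithmetic progression.
      obtain ⟨d, ⟨e, he⟩, hord⟩ := hd
      set N := 2 * r * r * n with hNdef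
      have hN0 : 0 < N := by positivity
      have hinj : Function.Injective (fun k : ℕ => (k + 1) • d) := by
        have haux : ∀ k l : ℕ, k < l → (k + 1) • d ≠ (l + 1) • d := by
          intro k l hkl h
          have h1 : (l + 1) • d = (k + 1) • d + (l - k) • d := by
            rw [← add_nsmul]
            congr 1
            omega
          rw [h1, left_eq_add] at h
          exact hord (l - k) (by omega) h
        intro k l h
        rcases lt_trichotomy k l with h' | h' | h'
        · exact absurd h (haux k l h')
        · exact h'
        · exact absurd h.symm (haux l k h')
      set F := (Finset.range N).image (fun k => (k + 1) • d) with hFdef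
      set S := (Finset.range (2 * N)).image (fun k => (k + 1) • d) with hSdef
      have hFcard : F.card = N := by
        rw [hFdef, Finset.card_image_of_injective _ hinj, Finset.card_range]
      have hmem : ∀ a ∈ F, ∃ k : ℕ, k < N ∧ a = (k + 1) • d := by
        intro a ha
        rw [hFdef, Finset.mem_image] at ha
        obtain ⟨k, hk, rfl⟩ := ha
        exact ⟨k, Finset.mem_range.mp hk, rfl⟩
      have hadd : ∀ a ∈ F, ∀ b ∈ F, a + b ∈ S := by
        intro a ha b hb
        obtain ⟨k, hk, rfl⟩ := hmem a ha
        obtain ⟨l, hl, rfl⟩ := hmem b hb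
        rw [hSdef, Finset.mem_image]
        refine ⟨k + l + 1, Finset.mem_range.mpr (by omega), ?_⟩
        rw [← add_nsmul]
        congr 1
        omega
      have hdiv : ∀ a ∈ F, ∀ b ∈ F, ∃ x : G, a + b = x + x := by
        intro a ha b hb
        obtain ⟨k, hk, rfl⟩ := hmem a ha
        obtain ⟨l, hl, rfl⟩ := hmem b hb
        refine ⟨(k + l + 2) • e, ?_⟩
        rw [← add_nsmul]
        have h1 : k + 1 + (l + 1) = k + l + 2 := by omega
        rw [h1, ← he, smul_add]
      have hScard : S.card ≤ 2 * F.card := by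
        rw [hFcard]
        calc S.card ≤ (Finset.range (2 * N)).card := Finset.card_image_le
          _ = 2 * N := Finset.card_range _
      obtain ⟨c, x, T, hT, hprop⟩ := key χ hr n hn F S hadd hdiv (by rw [hFcard]) hScard
      refine assemble χ n c x T hT ?_
      intro a ha
      have h2 : (2 : ℕ) • x = x + x := two_nsmul x
      rw [h2]
      exact hprop a ha
    · -- Torsion case: use a large finite subgroup.
      push_neg at hd
      -- `H` as a subgroup.
      set Hgrp : AddSubgroup G :=
        { carrier := H
          zero_mem' := ⟨0, add_zero 0⟩
          add_mem' := by
            rintro a b ⟨u, rfl⟩ ⟨v, rfl⟩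
            exact ⟨u + v, by abel⟩
          neg_mem' := by
            rintro a ⟨u, rfl⟩
            exact ⟨-u, by abel⟩ } with hHgrp
      set N := 2 * r * r * n with hNdef
      obtain ⟨Sfin, hSsub, hScard⟩ := hH.exists_subset_card_eq N
      set K : AddSubgroup G := AddSubgroup.closure (↑Sfin : Set G) with hKdef
      have hKH : K ≤ Hgrp := (AddSubgroup.closure_le _).2 hSsub
      have htor : AddMonoid.IsTorsion ↥K := by
        intro k
        obtain ⟨m, hm, hmk⟩ := hd (k : G) (hKH k.2)
        refine isOfFinAddOrder_iff_nsmul_eq_zero.2 ⟨m, hm, ?_⟩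
        exact Subtype.ext (by push_cast; exact hmk)
      have hfin : Finite ↥K := AddCommGroup.finite_of_fg_torsion ↥K htor
      have hKfin : (↑K : Set G).Finite := (↑K : Set G).toFinite
      set F := hKfin.toFinset with hFdef
      have hmemF : ∀ a, a ∈ F ↔ a ∈ K := by
        intro a
        rw [hFdef, Set.Finite.mem_toFinset]
        rfl
      have hFcard : N ≤ F.card := by
        rw [← hScard]
        apply Finset.card_le_card
        intro a ha
        rw [hmemF]
        exact AddSubgroup.subset_closure ha
      have hadd : ∀ a ∈ F, ∀ b ∈ F, a + b ∈ F := by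
        intro a ha b hb
        rw [hmemF] at ha hb ⊢
        exact K.add_mem ha hb
      have hdiv : ∀ a ∈ F, ∀ b ∈ F, ∃ x : G, a + b = x + x := by
        intro a ha b hb
        rw [hmemF] at ha hb
        obtain ⟨u, hu⟩ := hKH ha
        obtain ⟨v, hv⟩ := hKH hb
        exact ⟨u + v, by rw [← hu, ← hv]; abel⟩
      obtain ⟨c, x, T, hT, hprop⟩ := key χ hr n hn F F hadd hdiv hFcard (by omega)
      refine assemble χ n c x T hT ?_
      intro a ha
      have h2 : (2 : ℕ) • x = x + x := two_nsmul x
      rw [h2]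
      exact hprop a ha
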